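/- Let n ≥ 2. Then det N = (49√3/75) · [ ((2+√3)/7)^{n+1} − ((2−√3)/7)^{n+1} ]. -/
import Mathlib


/-- The tridiagonal matrix `N` (of size `(n+1) × (n+1)`). -/
noncomputable def Nmat (n : ℕ) : Matrix (Fin (n+1)) (Fin (n+1)) ℝ :=
  Matrix.of fun i j =>
    if i = j then (if i.val = 0 ∨ i.val = n then 3/5 else 4/7)
    else if i.val + 1 = j.val ∨ j.val + 1 = i.val then
      (if min i.val j.val = 0 ∨ max i.val j.val = n then -(1/Real.sqrt 35) else -(1/7))
    else 0

/-- A general tridiagonal matrix with diagonal `a`, superdiagonal `b`, subdiagonal `c`. -/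
noncomputable def triM (a b c : ℕ → ℝ) (k : ℕ) : Matrix (Fin k) (Fin k) ℝ :=
  Matrix.of fun i j =>
    if (i : ℕ) = j then a i
    else if (i : ℕ) + 1 = j then b i
    else if (j : ℕ) + 1 = i then c j
    else 0

/-- The continuant recursion for tridiagonal determinants. -/
noncomputable def ddT (a b c : ℕ → ℝ) : ℕ → ℝ
  | 0 => 1
  | 1 => a 0
  | (k+2) => a (k+1) * ddT a b c (k+1) - b k * c k * ddT a b c k

lemma det_triM (a b c : ℕ → ℝ) : ∀ k, (triM a b c k).det = ddT a b c k
  | 0 => by simp [ddT]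
  | 1 => by
      rw [show (1 : ℕ) = Nat.succ 0 from rfl]
      rw [Matrix.det_fin_one]
      rfl
  | (k+2) => by
      have IH1 := det_triM a b c (k+1)
      have IH0 := det_triM a b c k
      set A := triM a b c (k+2) with hA
      have hz : ∀ j : Fin k,
          A (Fin.last (k+1)) (Fin.castSucc (Fin.castSucc j)) = 0 := by
        intro j
        have hj := j.isLt
        show (if _ then _ else _) = (0:ℝ)
        simp only [Fin.val_last, Fin.coe_castSucc]
        rw [if_neg (by omega), if_neg (by omega), if_neg (by omega)]
      have e1 : A (Fin.last (k+1)) (Fin.castSucc (Fin.last k)) = c k := by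
        show (if _ then _ else _) = _
        simp only [Fin.val_last, Fin.coe_castSucc]
        rw [if_neg (by omega), if_neg (by omega)]
        simp
      have e2 : A (Fin.last (k+1)) (Fin.last (k+1)) = a (k+1) := by
        show (if _ then _ else _) = _
        simp
      have hM1 : A.submatrix Fin.castSucc Fin.castSucc
          = triM a b c (k+1) := by
        ext i j
        simp only [Matrix.submatrix_apply, hA, triM, Matrix.of_apply, Fin.coe_castSucc]
      set B := A.submatrix Fin.castSucc ((Fin.castSucc (Fin.last k)).succAbove) with hB
      have hp1 : (Fin.castSucc (Fin.last k)).succAbove (Fin.last k) = Fin.last (k+1) := by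
        rw [Fin.succAbove_of_le_castSucc _ _ le_rfl, Fin.succ_last]
      have hp2 : ∀ j : Fin k,
          (Fin.castSucc (Fin.last k)).succAbove (Fin.castSucc j)
            = Fin.castSucc (Fin.castSucc j) := by
        intro j
        apply Fin.succAbove_of_castSucc_lt
        simp only [Fin.lt_def, Fin.coe_castSucc, Fin.val_last]
        exact j.isLt
      have hBz : ∀ i : Fin k, B (Fin.castSucc i) (Fin.last k) = 0 := by
        intro i
        have hi := i.isLt
        show A _ _ = 0
        rw [hp1]
        show (if _ then _ else _) = (0:ℝ)
        simp only [Fin.val_last, Fin.coe_castSucc]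
        rw [if_neg (by omega), if_neg (by omega), if_neg (by omega)]
      have hBe : B (Fin.last k) (Fin.last k) = b k := by
        show A _ _ = _
        rw [hp1]
        show (if _ then _ else _) = _
        simp only [Fin.val_last, Fin.coe_castSucc]
        rw [if_neg (by omega)]
        simp
      have hM2 : B.submatrix (Fin.last k).succAbove (Fin.last k).succAbove
          = triM a b c k := by
        rw [Fin.succAbove_last]
        ext i j
        show A _ _ = _
        rw [hp2]
        show (if _ then _ else _) = _
        simp only [Fin.coe_castSucc]
        rfl
      have hdetB : B.det = b k * ddT a b c k := by
        rw [Matrix.det_succ_column B (Fin.last k), Fin.sum_univ_castSucc]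
        rw [Finset.sum_eq_zero (fun i _ => by rw [hBz i, mul_zero, zero_mul])]
        rw [hBe, hM2, IH0, zero_add]
        have : ((Fin.last k : Fin (k+1)) : ℕ) + ((Fin.last k : Fin (k+1)) : ℕ) = k + k := by
          simp
        rw [this]
        have : (-1 : ℝ) ^ (k + k) = 1 := Even.neg_one_pow ⟨k, rfl⟩
        rw [this, one_mul]
      rw [Matrix.det_succ_row A (Fin.last (k+1))]
      rw [Fin.sum_univ_castSucc, Fin.sum_univ_castSucc]
      simp only [Fin.succAbove_last]
      rw [Finset.sum_eq_zero (fun j _ => by rw [hz j, mul_zero, zero_mul])]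
      rw [e1, e2, hM1, IH1, zero_add]
      have h1 : ((Fin.last (k+1) : Fin (k+2)) : ℕ)
          + ((Fin.castSucc (Fin.last k) : Fin (k+2)) : ℕ) = k + 1 + k := by simp
      have h2 : ((Fin.last (k+1) : Fin (k+2)) : ℕ)
          + ((Fin.last (k+1) : Fin (k+2)) : ℕ) = (k+1) + (k+1) := by simp
      rw [h1, h2]
      have s1 : (-1 : ℝ) ^ (k + 1 + k) = -1 := Odd.neg_one_pow ⟨k, by ring⟩
      have s2 : (-1 : ℝ) ^ ((k+1) + (k+1)) = 1 := Even.neg_one_pow ⟨k+1, rfl⟩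
      rw [s1, s2, hdetB]
      show _ = a (k+1) * ddT a b c (k+1) - b k * c k * ddT a b c k
      ring

noncomputable def aseq (n : ℕ) : ℕ → ℝ := fun i => if i = 0 ∨ i = n then 3/5 else 4/7
noncomputable def bseq (n : ℕ) : ℕ → ℝ :=
  fun i => if i = 0 ∨ i + 1 = n then -(1/Real.sqrt 35) else -(1/7)

lemma h3R : Real.sqrt 3 ^ 2 = 3 := Real.sq_sqrt (by norm_num)

lemma h35R : (-(1/Real.sqrt 35)) * (-(1/Real.sqrt 35)) = 1/35 := by
  rw [neg_mul_neg, div_mul_div_comm, one_mul, Real.mul_self_sqrt (by norm_num)]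

noncomputable def FcF (m : ℕ) : ℝ :=
  (7/30) * ((3 + Real.sqrt 3) * ((2 + Real.sqrt 3)/7)^m
    + (3 - Real.sqrt 3) * ((2 - Real.sqrt 3)/7)^m)

lemma ddT_closed (n : ℕ) (hn : 2 ≤ n) :
    ∀ m, 1 ≤ m → m ≤ n → ddT (aseq n) (bseq n) (bseq n) m = FcF m := by
  intro m
  induction m using Nat.strong_induction_on with
  | _ m IH =>
    match m with
    | 0 => intro h _; exact absurd h (by omega)
    | 1 => intro _ _
           show aseq n 0 = FcF 1
           rw [aseq, if_pos (Or.inl rfl), FcF]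
           have := h3R
           linear_combination (-1/15) * this
    | 2 => intro _ h2n
           show aseq n 1 * ddT _ _ _ 1 - bseq n 0 * bseq n 0 * ddT _ _ _ 0 = FcF 2
           show aseq n 1 * aseq n 0 - bseq n 0 * bseq n 0 * 1 = FcF 2
           rw [show bseq n 0 = -(1/Real.sqrt 35) from if_pos (Or.inl rfl)]
           rw [show aseq n 1 = 4/7 from if_neg (by omega)]
           rw [show aseq n 0 = 3/5 from if_pos (Or.inl rfl)]
           rw [mul_one, h35R, FcF]
           have := h3R
           linear_combination (-1/15) * this
    | (k+3) => intro _ hkn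
               have hk1 : ddT (aseq n) (bseq n) (bseq n) (k+1) = FcF (k+1) :=
                 IH (k+1) (by omega) (by omega) (by omega)
               have hk2 : ddT (aseq n) (bseq n) (bseq n) (k+2) = FcF (k+2) :=
                 IH (k+2) (by omega) (by omega) (by omega)
               show aseq n (k+2) * ddT _ _ _ (k+2) - bseq n (k+1) * bseq n (k+1) * ddT _ _ _ (k+1)
                 = FcF (k+3)
               rw [hk1, hk2]
               rw [show aseq n (k+2) = 4/7 from if_neg (by omega)]
               rw [show bseq n (k+1) = -(1/7) from if_neg (by omega)]
               rw [FcF, FcF, FcF, pow_succ, pow_succ, pow_succ, pow_succ]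
               have := h3R
               linear_combination
                 (-(1/1470)) * ((3 + Real.sqrt 3) * (2 + Real.sqrt 3) * ((2 + Real.sqrt 3)/7)^k
                   + (3 - Real.sqrt 3) * (2 - Real.sqrt 3) * ((2 - Real.sqrt 3)/7)^k) * this

lemma Nmat_eq_triM (n : ℕ) : Nmat n = triM (aseq n) (bseq n) (bseq n) (n+1) := by
  ext i j
  show (if _ then _ else _) = (if _ then _ else _)
  simp only [Fin.ext_iff, aseq, bseq]
  by_cases hij : (i : ℕ) = j
  · rw [if_pos hij, if_pos hij]
  · rw [if_neg hij, if_neg hij]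
    by_cases h1 : (i : ℕ) + 1 = j
    · rw [if_pos (Or.inl h1), if_pos h1]
      have hmin : min (i : ℕ) (j : ℕ) = i := by omega
      have hmax : max (i : ℕ) (j : ℕ) = (i : ℕ) + 1 := by omega
      rw [hmin, hmax]
    · rw [if_neg h1]
      by_cases h2 : (j : ℕ) + 1 = i
      · rw [if_pos (Or.inr h2), if_pos h2]
        have hmin : min (i : ℕ) (j : ℕ) = j := by omega
        have hmax : max (i : ℕ) (j : ℕ) = (j : ℕ) + 1 := by omega
        rw [hmin, hmax]
      · rw [if_neg (by tauto), if_neg h2]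

/-- For `n ≥ 2`, `det N = (49√3/75)·[((2+√3)/7)^{n+1} − ((2−√3)/7)^{n+1}]`. -/
theorem det_Nmat (n : ℕ) (hn : 2 ≤ n) :
    (Nmat n).det
      = (49 * Real.sqrt 3 / 75)
        * (((2 + Real.sqrt 3) / 7)^(n+1) - ((2 - Real.sqrt 3) / 7)^(n+1)) := by
  obtain ⟨k, rfl⟩ : ∃ k, n = k + 2 := ⟨n - 2, by omega⟩
  rw [Nmat_eq_triM, det_triM]
  have hk1 : ddT (aseq (k+2)) (bseq (k+2)) (bseq (k+2)) (k+1) = FcF (k+1) :=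
    ddT_closed (k+2) (by omega) (k+1) (by omega) (by omega)
  have hk2 : ddT (aseq (k+2)) (bseq (k+2)) (bseq (k+2)) (k+2) = FcF (k+2) :=
    ddT_closed (k+2) (by omega) (k+2) (by omega) (by omega)
  show aseq (k+2) (k+2) * ddT _ _ _ (k+2)
      - bseq (k+2) (k+1) * bseq (k+2) (k+1) * ddT _ _ _ (k+1) = _
  rw [hk1, hk2]
  rw [show aseq (k+2) (k+2) = 3/5 from if_pos (Or.inr rfl)]
  rw [show bseq (k+2) (k+1) = -(1/Real.sqrt 35) from if_pos (Or.inr rfl)]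
  rw [h35R, FcF, FcF]
  rw [show k+2+1 = (k+1)+1+1 from rfl, show k+2 = (k+1)+1 from rfl]
  rw [pow_succ, pow_succ, pow_succ, pow_succ, pow_succ, pow_succ]
  have := h3R
  linear_combination
    ((-(2*Real.sqrt 3 + 5)) * ((2 + Real.sqrt 3)/7)^(k+1)
      + (2*Real.sqrt 3 - 5) * ((2 - Real.sqrt 3)/7)^(k+1)) / 150 * this
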